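/- Let T : Xⁿ → ℤ have sensitivity 1, i.e., |T(x) − T(x')| ≤ 1 whenever x and x' differ in one coordinate. Then the mechanism releasing Z ~ Tulap(T(x), b, q) with b = e^{−ε} and q = 2δb/(1 − b + 2δb) satisfies (ε,δ)-differential privacy: for all measurable B ⊆ ℝ and all neighboring x, x', P(Z ∈ B | T(x)) ≤ e^ε P(Z ∈ B | T(x')) + δ. -/

import Mathlib

open MeasureTheory Set
open scoped ENNReal

namespace Stmt14Aux

noncomputable def clamp (x : ℝ) : ℝ := max 0 (min 1 x)

lemma clamp_nonneg (x : ℝ) : 0 ≤ clamp x := le_max_left _ _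
lemma clamp_le_one (x : ℝ) : clamp x ≤ 1 := max_le zero_le_one (min_le_left _ _)
lemma clamp_mono : Monotone clamp := fun x y h =>
  max_le_max le_rfl (min_le_min le_rfl h)
lemma clamp_of_le_zero {x : ℝ} (h : x ≤ 0) : clamp x = 0 := by
  unfold clamp
  rw [max_eq_left]
  exact (min_le_right _ _).trans h
lemma clamp_of_one_le {x : ℝ} (h : 1 ≤ x) : clamp x = 1 := by
  unfold clamp
  rw [min_eq_left h, max_eq_right zero_le_one]
lemma clamp_of_mem {x : ℝ} (h0 : 0 ≤ x) (h1 : x ≤ 1) : clamp x = x := by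
  unfold clamp
  rw [min_eq_right h1, max_eq_right h0]

lemma clamp_sub_le {x y : ℝ} (h : x ≤ y) : clamp y - clamp x ≤ y - x := by
  by_cases hy : y ≤ 0
  · rw [clamp_of_le_zero hy, clamp_of_le_zero (h.trans hy)]; linarith
  by_cases hx : 1 ≤ x
  · rw [clamp_of_one_le hx, clamp_of_one_le (hx.trans h)]; linarith
  push_neg at hy hx
  have h1 : clamp y ≤ y := max_le hy.le (min_le_right _ _)
  have h2 : x ≤ clamp x := le_max_of_le_right (le_min hx.le le_rfl)
  linarith

lemma clamp_lip (x y : ℝ) : |clamp x - clamp y| ≤ |x - y| := by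
  rcases le_total x y with h | h
  · rw [abs_sub_comm, abs_sub_comm x y, abs_of_nonneg (sub_nonneg.2 (clamp_mono h)),
      abs_of_nonneg (sub_nonneg.2 h)]
    exact clamp_sub_le h
  · rw [abs_of_nonneg (sub_nonneg.2 (clamp_mono h)), abs_of_nonneg (sub_nonneg.2 h)]
    exact clamp_sub_le h


lemma natAbs_negsucc (n : ℕ) : (-((n : ℤ) + 1)).natAbs = n + 1 := by
  rw [show -((n : ℤ) + 1) = -(((n+1) : ℕ) : ℤ) by push_cast; ring,
    Int.natAbs_neg, Int.natAbs_natCast]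

lemma summable_pow {b : ℝ} (hb0 : 0 < b) (hb1 : b < 1) :
    Summable (fun l : ℤ => b ^ l.natAbs) := by
  apply Summable.of_nat_of_neg <;>
    · simp only [Int.natAbs_neg, Int.natAbs_natCast]
      exact summable_geometric_of_lt_one hb0.le hb1

lemma tsum_pow {b : ℝ} (hb0 : 0 < b) (hb1 : b < 1) :
    ∑' l : ℤ, b ^ l.natAbs = (1 + b) / (1 - b) := by
  have hg : Summable (fun n : ℕ => b ^ n) := summable_geometric_of_lt_one hb0.le hb1
  have e1 : (fun n : ℕ => b ^ ((n : ℤ)).natAbs) = fun n : ℕ => b ^ n := by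
    funext n; rw [Int.natAbs_natCast]
  have e2 : (fun n : ℕ => b ^ ((-((n : ℤ) + 1)).natAbs)) = fun n : ℕ => b * b ^ n := by
    funext n; rw [natAbs_negsucc, pow_succ, mul_comm]
  rw [tsum_of_nat_of_neg_add_one (by rw [e1]; exact hg) (by rw [e2]; exact hg.mul_left b),
    e1, e2, tsum_geometric_of_lt_one hb0.le hb1, tsum_mul_left,
    tsum_geometric_of_lt_one hb0.le hb1]
  have : (1:ℝ) - b ≠ 0 := by linarith
  field_simp

noncomputable def tF (b : ℝ) (u : ℝ) : ℝ :=
  ∑' l : ℤ, (1 - b) / (1 + b) * b ^ l.natAbs * clamp (u - l + 1/2)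

variable {b : ℝ}

lemma C_pos (hb0 : 0 < b) (hb1 : b < 1) : 0 < (1 - b) / (1 + b) := by
  apply div_pos <;> linarith

lemma summable_p (hb0 : 0 < b) (hb1 : b < 1) :
    Summable (fun l : ℤ => (1 - b) / (1 + b) * b ^ l.natAbs) :=
  (summable_pow hb0 hb1).mul_left _

lemma tsum_p (hb0 : 0 < b) (hb1 : b < 1) :
    ∑' l : ℤ, (1 - b) / (1 + b) * b ^ l.natAbs = 1 := by
  rw [tsum_mul_left, tsum_pow hb0 hb1]
  have h1 : (1:ℝ) - b ≠ 0 := by linarith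
  have h2 : (1:ℝ) + b ≠ 0 := by linarith
  field_simp

lemma summable_term (hb0 : 0 < b) (hb1 : b < 1) (u : ℝ) :
    Summable (fun l : ℤ => (1 - b) / (1 + b) * b ^ l.natAbs * clamp (u - l + 1/2)) := by
  have hC := C_pos hb0 hb1
  apply Summable.of_nonneg_of_le
    (fun l => mul_nonneg (by positivity) (clamp_nonneg _))
    (fun l => ?_) (summable_p hb0 hb1)
  calc (1 - b) / (1 + b) * b ^ l.natAbs * clamp (u - l + 1/2)
      ≤ (1 - b) / (1 + b) * b ^ l.natAbs * 1 := by
        apply mul_le_mul_of_nonneg_left (clamp_le_one _) (by positivity)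
    _ = (1 - b) / (1 + b) * b ^ l.natAbs := mul_one _

lemma tF_mono (hb0 : 0 < b) (hb1 : b < 1) : Monotone (tF b) := by
  intro x y h
  apply Summable.tsum_le_tsum _ (summable_term hb0 hb1 x) (summable_term hb0 hb1 y)
  intro l
  have := C_pos hb0 hb1
  apply mul_le_mul_of_nonneg_left (clamp_mono (by linarith)) (by positivity)

lemma tF_lip (hb0 : 0 < b) (hb1 : b < 1) (x y : ℝ) :
    |tF b x - tF b y| ≤ |x - y| := by
  have hC := C_pos hb0 hb1
  rw [tF, tF, ← Summable.tsum_sub (summable_term hb0 hb1 x) (summable_term hb0 hb1 y)]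
  have habs : ∀ l : ℤ, |(1 - b) / (1 + b) * b ^ l.natAbs * clamp (x - l + 1/2) -
      (1 - b) / (1 + b) * b ^ l.natAbs * clamp (y - l + 1/2)| ≤
      (1 - b) / (1 + b) * b ^ l.natAbs * |x - y| := by
    intro l
    rw [← mul_sub, abs_mul, abs_of_nonneg (by positivity)]
    apply mul_le_mul_of_nonneg_left _ (by positivity)
    calc |clamp (x - l + 1/2) - clamp (y - l + 1/2)| ≤ |(x - l + 1/2) - (y - l + 1/2)| :=
        clamp_lip _ _
      _ = |x - y| := by ring_nf
  calc |∑' l : ℤ, ((1 - b) / (1 + b) * b ^ l.natAbs * clamp (x - l + 1/2) -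
        (1 - b) / (1 + b) * b ^ l.natAbs * clamp (y - l + 1/2))|
      ≤ ∑' l : ℤ, (1 - b) / (1 + b) * b ^ l.natAbs * |x - y| := by
        have := norm_tsum_le_tsum_norm (f := fun l : ℤ =>
          (1 - b) / (1 + b) * b ^ l.natAbs * clamp (x - l + 1/2) -
          (1 - b) / (1 + b) * b ^ l.natAbs * clamp (y - l + 1/2)) ?_
        · rw [Real.norm_eq_abs] at this
          apply this.trans
          apply Summable.tsum_le_tsum _ ?_ ((summable_p hb0 hb1).mul_right _)
          · intro l; rw [Real.norm_eq_abs]; exact habs l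
          · apply Summable.of_nonneg_of_le (fun l => norm_nonneg _)
              (fun l => (habs l).trans_eq' (Real.norm_eq_abs _))
              ((summable_p hb0 hb1).mul_right _)
        · apply Summable.of_nonneg_of_le (fun l => norm_nonneg _)
            (fun l => (habs l).trans_eq' (Real.norm_eq_abs _))
            ((summable_p hb0 hb1).mul_right _)
    _ = |x - y| := by rw [tsum_mul_right, tsum_p hb0 hb1, one_mul]



lemma tF_cont (hb0 : 0 < b) (hb1 : b < 1) : Continuous (tF b) := by
  have hl : LipschitzWith 1 (tF b) := by
    apply LipschitzWith.of_dist_le_mul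
    intro x y
    simpa [Real.dist_eq] using tF_lip hb0 hb1 x y
  exact hl.continuous

variable {b : ℝ}

noncomputable def f0 (b : ℝ) (u : ℝ) : ℝ := (1 - b) / (1 + b) * b ^ (round u).natAbs

lemma pow_natAbs_succ_le (hb0 : 0 < b) (hb1 : b < 1) (m : ℤ) :
    b ^ (m + 1).natAbs ≤ b ^ m.natAbs / b := by
  rw [le_div_iff₀ hb0, ← pow_succ]
  apply pow_le_pow_of_le_one hb0.le hb1.le
  calc m.natAbs = ((m + 1) + (-1)).natAbs := by ring_nf
    _ ≤ (m + 1).natAbs + (-1 : ℤ).natAbs := Int.natAbs_add_le _ _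
    _ = (m + 1).natAbs + 1 := rfl

lemma pow_le_pow_natAbs_succ (hb0 : 0 < b) (hb1 : b < 1) (m : ℤ) :
    b * b ^ m.natAbs ≤ b ^ (m + 1).natAbs := by
  rw [← pow_succ']
  apply pow_le_pow_of_le_one hb0.le hb1.le
  calc (m+1).natAbs ≤ m.natAbs + (1:ℤ).natAbs := Int.natAbs_add_le _ _
    _ = m.natAbs + 1 := rfl

lemma tF_shift (hb0 : 0 < b) (hb1 : b < 1) (u : ℝ) :
    tF b (u + 1) = ∑' m : ℤ, (1 - b) / (1 + b) * b ^ (m + 1).natAbs * clamp (u - m + 1/2) := by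
  rw [tF]
  rw [← Equiv.tsum_eq (Equiv.addRight (1 : ℤ))
    (fun l : ℤ => (1 - b) / (1 + b) * b ^ l.natAbs * clamp (u + 1 - l + 1/2))]
  apply tsum_congr
  intro m
  simp only [Equiv.coe_addRight]
  push_cast
  ring_nf

lemma summable_shift (hb0 : 0 < b) (hb1 : b < 1) :
    Summable (fun m : ℤ => (1 - b) / (1 + b) * b ^ (m + 1).natAbs) := by
  have := (Equiv.addRight (1 : ℤ)).summable_iff
    (f := fun l : ℤ => (1 - b) / (1 + b) * b ^ l.natAbs)
  exact this.2 (summable_p hb0 hb1)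

lemma tsum_p_shift (hb0 : 0 < b) (hb1 : b < 1) :
    ∑' m : ℤ, (1 - b) / (1 + b) * b ^ (m + 1).natAbs = 1 := by
  exact (Equiv.tsum_eq (Equiv.addRight (1 : ℤ))
    (fun l : ℤ => (1 - b) / (1 + b) * b ^ l.natAbs)).trans (tsum_p hb0 hb1)

lemma summable_term_shift (hb0 : 0 < b) (hb1 : b < 1) (u : ℝ) :
    Summable (fun m : ℤ => (1 - b) / (1 + b) * b ^ (m + 1).natAbs * clamp (u - m + 1/2)) := by
  have hC := C_pos hb0 hb1
  apply Summable.of_nonneg_of_le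
    (fun m => mul_nonneg (by positivity) (clamp_nonneg _))
    (fun m => ?_) (summable_shift hb0 hb1)
  calc (1 - b) / (1 + b) * b ^ (m+1).natAbs * clamp (u - m + 1/2)
      ≤ (1 - b) / (1 + b) * b ^ (m+1).natAbs * 1 :=
        mul_le_mul_of_nonneg_left (clamp_le_one _) (by positivity)
    _ = (1 - b) / (1 + b) * b ^ (m+1).natAbs := mul_one _

lemma tF_ineqA (hb0 : 0 < b) (hb1 : b < 1) (u : ℝ) :
    tF b (u + 1) ≤ tF b u / b := by
  rw [tF_shift hb0 hb1]
  have hC := C_pos hb0 hb1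
  have h : tF b u / b = ∑' l : ℤ, ((1 - b) / (1 + b) * b ^ l.natAbs * clamp (u - l + 1/2)) / b := by
    rw [tF, tsum_div_const]
  rw [h]
  apply Summable.tsum_le_tsum _ (summable_term_shift hb0 hb1 u) ((summable_term hb0 hb1 u).div_const b)
  intro m
  calc (1 - b) / (1 + b) * b ^ (m + 1).natAbs * clamp (u - m + 1/2)
      ≤ (1 - b) / (1 + b) * (b ^ m.natAbs / b) * clamp (u - m + 1/2) := by
        apply mul_le_mul_of_nonneg_right
          (mul_le_mul_of_nonneg_left (pow_natAbs_succ_le hb0 hb1 m) hC.le) (clamp_nonneg _)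
    _ = (1 - b) / (1 + b) * b ^ m.natAbs * clamp (u - m + 1/2) / b := by ring

lemma tF_ineqB (hb0 : 0 < b) (hb1 : b < 1) (u : ℝ) :
    tF b (u + 1) ≤ 1 - b + b * tF b u := by
  rw [tF_shift hb0 hb1]
  have hC := C_pos hb0 hb1
  have key : ∀ m : ℤ, (1 - b) / (1 + b) * b ^ (m + 1).natAbs * clamp (u - m + 1/2)
      ≤ b * ((1 - b) / (1 + b) * b ^ m.natAbs * clamp (u - m + 1/2)) +
        ((1 - b) / (1 + b) * b ^ (m + 1).natAbs - b * ((1 - b) / (1 + b) * b ^ m.natAbs)) := by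
    intro m
    have h1 : b * ((1 - b) / (1 + b) * b ^ m.natAbs) ≤ (1 - b) / (1 + b) * b ^ (m + 1).natAbs := by
      rw [← mul_assoc, mul_comm b, mul_assoc]
      exact mul_le_mul_of_nonneg_left (pow_le_pow_natAbs_succ hb0 hb1 m) hC.le
    have h2 := clamp_nonneg (u - m + 1/2)
    have h3 := clamp_le_one (u - m + 1/2)
    nlinarith
  calc ∑' m : ℤ, (1 - b) / (1 + b) * b ^ (m + 1).natAbs * clamp (u - m + 1/2)
      ≤ ∑' m : ℤ, (b * ((1 - b) / (1 + b) * b ^ m.natAbs * clamp (u - m + 1/2)) +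
        ((1 - b) / (1 + b) * b ^ (m + 1).natAbs - b * ((1 - b) / (1 + b) * b ^ m.natAbs))) := by
        apply Summable.tsum_le_tsum key (summable_term_shift hb0 hb1 u)
        apply Summable.add (((summable_term hb0 hb1 u)).mul_left b)
        exact (summable_shift hb0 hb1).sub ((summable_p hb0 hb1).mul_left b)
    _ = b * tF b u + (1 - b) := by
        rw [Summable.tsum_add (((summable_term hb0 hb1 u)).mul_left b)
          ((summable_shift hb0 hb1).sub ((summable_p hb0 hb1).mul_left b))]
        have hA : ∑' m : ℤ, b * ((1 - b) / (1 + b) * b ^ m.natAbs * clamp (u - m + 1/2))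
            = b * tF b u := tsum_mul_left
        have hB : ∑' m : ℤ, ((1 - b) / (1 + b) * b ^ (m + 1).natAbs -
            b * ((1 - b) / (1 + b) * b ^ m.natAbs)) = 1 - b := by
          rw [Summable.tsum_sub (summable_shift hb0 hb1) ((summable_p hb0 hb1).mul_left b),
            tsum_p_shift hb0 hb1]
          have : ∑' m : ℤ, b * ((1 - b) / (1 + b) * b ^ m.natAbs) = b * 1 := by
            rw [tsum_mul_left, tsum_p hb0 hb1]
          rw [this]; ring
        rw [hA, hB]
    _ = 1 - b + b * tF b u := by ring


lemma tF_local_linear (hb0 : 0 < b) (hb1 : b < 1) {u x : ℝ} (hux : u ≤ x)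
    (hx : x < (round u : ℝ) + 1/2) :
    tF b x = tF b u + (1 - b) / (1 + b) * b ^ (round u).natAbs * (x - u) := by
  set l := round u with hl
  have hu1 : (l : ℝ) - 1/2 ≤ u := by
    have := Int.floor_le (u + 1/2)
    rw [hl, round_eq]; push_cast
    linarith [Int.floor_le (u + 1/2)]
  have key : ∀ m : ℤ, (1 - b) / (1 + b) * b ^ m.natAbs * clamp (x - m + 1/2) -
      (1 - b) / (1 + b) * b ^ m.natAbs * clamp (u - m + 1/2) =
      (if m = l then (1 - b) / (1 + b) * b ^ l.natAbs * (x - u) else 0) := by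
    intro m
    rcases lt_trichotomy m l with hm | hm | hm
    · have hm1 : (m : ℝ) + 1 ≤ l := by exact_mod_cast Int.add_one_le_iff.2 hm
      rw [if_neg hm.ne, clamp_of_one_le (by linarith), clamp_of_one_le (by linarith)]
      ring
    · subst hm
      rw [if_pos rfl, clamp_of_mem (by linarith) (by linarith),
        clamp_of_mem (by linarith) (by linarith)]
      ring
    · have hm1 : (l : ℝ) + 1 ≤ m := by exact_mod_cast Int.add_one_le_iff.2 hm
      rw [if_neg hm.ne', clamp_of_le_zero (by linarith), clamp_of_le_zero (by linarith)]
      ring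
  have hsub : tF b x - tF b u = ∑' m : ℤ,
      ((1 - b) / (1 + b) * b ^ m.natAbs * clamp (x - m + 1/2) -
       (1 - b) / (1 + b) * b ^ m.natAbs * clamp (u - m + 1/2)) :=
    (Summable.tsum_sub (summable_term hb0 hb1 x) (summable_term hb0 hb1 u)).symm
  rw [tsum_congr key, tsum_ite_eq] at hsub
  linarith

lemma tF_hasDerivWithinAt (hb0 : 0 < b) (hb1 : b < 1) (u : ℝ) :
    HasDerivWithinAt (tF b) (f0 b u) (Set.Ioi u) u := by
  set l := round u with hl
  have hu2 : u < (l : ℝ) + 1/2 := by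
    rw [hl, round_eq]
    push_cast
    linarith [Int.lt_floor_add_one (u + 1/2)]
  have hg : HasDerivWithinAt (fun x => tF b u + f0 b u * (x - u)) (f0 b u) (Set.Ioi u) u := by
    have : HasDerivAt (fun x => tF b u + f0 b u * (x - u)) (f0 b u) u := by
      simpa using (((hasDerivAt_id u).sub_const u).const_mul (f0 b u)).const_add (tF b u)
    exact this.hasDerivWithinAt
  apply hg.congr_of_eventuallyEq
  · have hmem : Set.Iio ((l : ℝ) + 1/2) ∈ nhdsWithin u (Set.Ioi u) :=
      nhdsWithin_le_nhds (Iio_mem_nhds hu2)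
    filter_upwards [hmem, self_mem_nhdsWithin] with x hx1 hx2
    exact tF_local_linear hb0 hb1 (le_of_lt hx2) hx1
  · simp

lemma f0_nonneg (hb0 : 0 < b) (hb1 : b < 1) (u : ℝ) : 0 ≤ f0 b u := by
  have := C_pos hb0 hb1; unfold f0; positivity

lemma f0_le (hb0 : 0 < b) (hb1 : b < 1) (u : ℝ) : f0 b u ≤ (1 - b) / (1 + b) := by
  have hC := C_pos hb0 hb1
  have h1 : f0 b u ≤ (1 - b) / (1 + b) * 1 :=
    mul_le_mul_of_nonneg_left (pow_le_one₀ hb0.le hb1.le) hC.le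
  linarith

lemma f0_measurable : Measurable (f0 b) := by
  have h1 : Measurable (fun u : ℝ => round u) := by
    simp_rw [round_eq]
    exact (measurable_id.add_const _).floor
  exact (measurable_from_top (f := fun k : ℤ => (1 - b) / (1 + b) * b ^ k.natAbs)).comp h1

lemma f0_intervalIntegrable (hb0 : 0 < b) (hb1 : b < 1) (γ β : ℝ) :
    IntervalIntegrable (f0 b) volume γ β := by
  apply IntervalIntegrable.mono_fun' (g := fun _ => (1 - b) / (1 + b)) intervalIntegrable_const
    f0_measurable.aestronglyMeasurable
  apply Filter.Eventually.of_forall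
  intro x
  show ‖f0 b x‖ ≤ (1 - b) / (1 + b)
  rw [Real.norm_eq_abs, abs_of_nonneg (f0_nonneg hb0 hb1 x)]
  exact f0_le hb0 hb1 x

lemma tF_ftc (hb0 : 0 < b) (hb1 : b < 1) {γ β : ℝ} (h : γ ≤ β) :
    ∫ u in γ..β, f0 b u = tF b β - tF b γ := by
  apply intervalIntegral.integral_eq_sub_of_hasDeriv_right_of_le h
    ((tF_cont hb0 hb1).continuousOn)
    (fun x _ => tF_hasDerivWithinAt hb0 hb1 x)
    (f0_intervalIntegrable hb0 hb1 γ β)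


noncomputable def muF (b : ℝ) : Measure ℝ :=
  volume.withDensity (fun u => ENNReal.ofReal (f0 b u))

variable {b : ℝ}

lemma muF_Ioc (hb0 : 0 < b) (hb1 : b < 1) {γ β : ℝ} (h : γ ≤ β) :
    muF b (Ioc γ β) = ENNReal.ofReal (tF b β - tF b γ) := by
  rw [muF, withDensity_apply _ measurableSet_Ioc,
    ← ofReal_integral_eq_lintegral_ofReal ((f0_intervalIntegrable hb0 hb1 γ β).1)
      (Filter.Eventually.of_forall (f0_nonneg hb0 hb1)),
    ← intervalIntegral.integral_of_le h, tF_ftc hb0 hb1 h]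

lemma muF_singleton (x : ℝ) : muF b {x} = 0 :=
  (withDensity_absolutelyContinuous volume _) (Real.volume_singleton)

lemma muF_level (hb0 : 0 < b) (hb1 : b < 1) (a c : ℝ) :
    muF b {u | a ≤ tF b u ∧ tF b u ≤ c} ≤ ENNReal.ofReal (c - a) := by
  set S := {u | a ≤ tF b u ∧ tF b u ≤ c} with hS
  have hSclosed : IsClosed S := by
    have : S = tF b ⁻¹' (Icc a c) := rfl
    rw [this]
    exact isClosed_Icc.preimage (tF_cont hb0 hb1)
  have hcover : S = ⋃ n : ℕ, S ∩ Icc (-(n : ℝ)) n := by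
    ext x
    simp only [mem_iUnion, mem_inter_iff, mem_Icc]
    constructor
    · intro hx
      obtain ⟨n, hn⟩ := exists_nat_ge |x|
      exact ⟨n, hx, ⟨(abs_le.1 hn).1, (abs_le.1 hn).2⟩⟩
    · rintro ⟨n, hx, _⟩; exact hx
  have hmono : Monotone (fun n : ℕ => S ∩ Icc (-(n : ℝ)) n) := by
    intro m n hmn
    apply inter_subset_inter_right
    apply Icc_subset_Icc (by exact_mod_cast neg_le_neg (Nat.cast_le.2 hmn)) (by exact_mod_cast hmn)
  rw [hcover, hmono.measure_iUnion]
  apply iSup_le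
  intro n
  set K := S ∩ Icc (-(n : ℝ)) n with hK
  rcases K.eq_empty_or_nonempty with he | hne
  · rw [he]; simp
  have hKclosed : IsClosed K := hSclosed.inter isClosed_Icc
  have hbdd_b : BddBelow K := (bddBelow_Icc).mono inter_subset_right
  have hbdd_a : BddAbove K := (bddAbove_Icc).mono inter_subset_right
  set γ' := sInf K
  set β' := sSup K
  have hγK : γ' ∈ K := hKclosed.csInf_mem hne hbdd_b
  have hβK : β' ∈ K := hKclosed.csSup_mem hne hbdd_a
  have hγβ : γ' ≤ β' := le_trans (csInf_le hbdd_b hne.some_mem) (le_csSup hbdd_a hne.some_mem)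
  have hsub : K ⊆ {γ'} ∪ Ioc γ' β' := by
    intro x hx
    rcases eq_or_lt_of_le (csInf_le hbdd_b hx) with h | h
    · exact Or.inl (by simp [← h]; rfl)
    · exact Or.inr ⟨h, le_csSup hbdd_a hx⟩
  calc muF b K ≤ muF b ({γ'} ∪ Ioc γ' β') := measure_mono hsub
    _ ≤ muF b {γ'} + muF b (Ioc γ' β') := measure_union_le _ _
    _ = ENNReal.ofReal (tF b β' - tF b γ') := by
        rw [muF_singleton, muF_Ioc hb0 hb1 hγβ, zero_add]
    _ ≤ ENNReal.ofReal (c - a) := by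
        apply ENNReal.ofReal_le_ofReal
        have h1 : a ≤ tF b γ' := hγK.1.1
        have h2 : tF b β' ≤ c := hβK.1.2
        linarith


lemma key_bound {b q : ℝ} (hb0 : 0 < b) (hb1 : b < 1) (hq1 : q < 1)
    (dens : ℤ → ℝ → ℝ)
    (hdens' : ∀ (c : ℤ) (t : ℝ), dens c t =
      if q/2 ≤ tF b (t - c) ∧ tF b (t - c) ≤ 1 - q/2 then f0 b (t - c) / (1 - q) else 0)
    (c : ℤ) (A Cc : ℝ) (E : Set ℝ)
    (hE : ∀ t ∈ E, dens c t ≠ 0 → A ≤ tF b (t - c) ∧ tF b (t - c) ≤ Cc) :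
    ∫⁻ t in E, ENNReal.ofReal (dens c t) ≤
      ENNReal.ofReal (Cc - A) * ENNReal.ofReal (1 - q)⁻¹ := by
  have hq' : (0:ℝ) < 1 - q := by linarith
  set S0 : Set ℝ := {u | A ≤ tF b u ∧ tF b u ≤ Cc} with hS0
  have hS0closed : IsClosed S0 := by
    have : S0 = tF b ⁻¹' (Icc A Cc) := rfl
    rw [this]; exact isClosed_Icc.preimage (tF_cont hb0 hb1)
  have hS0m : MeasurableSet S0 := hS0closed.measurableSet
  set h : ℝ → ℝ≥0∞ := fun u => ENNReal.ofReal (f0 b u / (1 - q)) with hh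
  have hmono : ∀ t ∈ E, ENNReal.ofReal (dens c t) ≤
      ((fun t : ℝ => t - (c:ℝ)) ⁻¹' S0).indicator (h ∘ (fun t : ℝ => t - (c:ℝ))) t := by
    intro t ht
    by_cases hz : dens c t = 0
    · rw [hz]; simp
    · have hmem : t ∈ (fun t : ℝ => t - (c:ℝ)) ⁻¹' S0 := hE t ht hz
      rw [indicator_of_mem hmem]
      apply ENNReal.ofReal_le_ofReal
      rw [hdens' c t]
      split
      · exact le_rfl
      · exact div_nonneg (f0_nonneg hb0 hb1 _) (by linarith)
  calc ∫⁻ t in E, ENNReal.ofReal (dens c t)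
      ≤ ∫⁻ t in E, ((fun t : ℝ => t - (c:ℝ)) ⁻¹' S0).indicator
          (h ∘ (fun t : ℝ => t - (c:ℝ))) t := by
        apply setLIntegral_mono _ hmono
        apply Measurable.indicator
        · exact ((f0_measurable.comp (measurable_sub_const _)).div_const _).ennreal_ofReal
        · exact hS0m.preimage (measurable_sub_const _)
    _ ≤ ∫⁻ t, ((fun t : ℝ => t - (c:ℝ)) ⁻¹' S0).indicator (h ∘ (fun t : ℝ => t - (c:ℝ))) t :=
        setLIntegral_le_lintegral _ _
    _ = ∫⁻ t, S0.indicator h (t - (c:ℝ)) := by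
        apply lintegral_congr
        intro t
        by_cases hmem : t - (c:ℝ) ∈ S0
        · rw [indicator_of_mem (by exact hmem), indicator_of_mem hmem]; rfl
        · rw [indicator_of_notMem (by exact hmem), indicator_of_notMem hmem]
    _ = ∫⁻ u, S0.indicator h u := lintegral_sub_right_eq_self (S0.indicator h) _
    _ = ∫⁻ u in S0, h u := lintegral_indicator hS0m h
    _ = (∫⁻ u in S0, ENNReal.ofReal (f0 b u)) * ENNReal.ofReal (1 - q)⁻¹ := by
        rw [← lintegral_mul_const _ (f0_measurable.ennreal_ofReal)]
        apply lintegral_congr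
        intro u
        show ENNReal.ofReal (f0 b u / (1 - q)) = _
        rw [div_eq_mul_inv, ENNReal.ofReal_mul' (by positivity)]
    _ ≤ ENNReal.ofReal (Cc - A) * ENNReal.ofReal (1 - q)⁻¹ := by
        apply mul_le_mul_left
        rw [← withDensity_apply _ hS0m]
        exact muF_level hb0 hb1 A Cc


end Stmt14Aux

open Stmt14Aux

theorem stmt_14 {X : Type*} [DecidableEq X] (n : ℕ) (ε δ : ℝ) (hε : 0 < ε) (hδ : 0 ≤ δ)
    (b q : ℝ) (hb : b = Real.exp (-ε)) (hq : q = 2 * δ * b / (1 - b + 2 * δ * b))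
    (T : (Fin n → X) → ℤ)
    (hT : ∀ x x' : Fin n → X, hammingDist x x' = 1 → |T x - T x'| ≤ 1)
    (F₀ : ℝ → ℝ)
    (hF₀ : ∀ x : ℝ, F₀ x = ∑' l : ℤ,
      ((1 - b) / (1 + b)) * b ^ l.natAbs * max 0 (min 1 (x - l + 1 / 2)))
    (dens : ℤ → ℝ → ℝ)
    (hdens : ∀ (c : ℤ) (t : ℝ), dens c t =
      if q / 2 ≤ F₀ (t - (c : ℝ)) ∧ F₀ (t - (c : ℝ)) ≤ 1 - q / 2 then
        ((1 - b) / (1 + b)) * b ^ (round (t - (c : ℝ))).natAbs / (1 - q) else 0)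
    (P : ℤ → Measure ℝ)
    (hP : ∀ c : ℤ, P c = volume.withDensity (fun t => ENNReal.ofReal (dens c t))) :
    ∀ x x' : Fin n → X, hammingDist x x' = 1 → ∀ B : Set ℝ, MeasurableSet B →
      (P (T x) B).toReal ≤ Real.exp ε * (P (T x') B).toReal + δ := by
  intro x x' hxx' B hB
  have hb0 : 0 < b := hb ▸ Real.exp_pos _
  have hb1 : b < 1 := by rw [hb]; exact Real.exp_lt_one_iff.2 (by linarith)
  have hD : 0 < 1 - b + 2 * δ * b := by nlinarith
  have hq0 : 0 ≤ q := by rw [hq]; positivity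
  have hq1 : q < 1 := by rw [hq, div_lt_one hD]; linarith
  have hqD : q * (1 - b + 2 * δ * b) = 2 * δ * b := by rw [hq]; field_simp
  have hexp : Real.exp ε = b⁻¹ := by rw [hb, Real.exp_neg, inv_inv]
  have hFt : ∀ u : ℝ, F₀ u = tF b u := fun u => by rw [hF₀ u]; rfl
  have hdens' : ∀ (c : ℤ) (t : ℝ), dens c t =
      if q/2 ≤ tF b (t - c) ∧ tF b (t - c) ≤ 1 - q/2 then f0 b (t - c) / (1 - q) else 0 := by
    intro c t
    rw [hdens c t, hFt]
    rfl
  have hdens_nonneg : ∀ (c : ℤ) (t : ℝ), 0 ≤ dens c t := by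
    intro c t
    rw [hdens' c t]
    split
    · exact div_nonneg (f0_nonneg hb0 hb1 _) (by linarith)
    · exact le_rfl
  have hdens_meas : ∀ c : ℤ, Measurable (dens c) := by
    intro c
    have he : dens c = fun t => if q/2 ≤ tF b (t - c) ∧ tF b (t - c) ≤ 1 - q/2
        then f0 b (t - c) / (1 - q) else 0 := funext (hdens' c)
    rw [he]
    apply Measurable.ite
    · have : {t : ℝ | q/2 ≤ tF b (t - c) ∧ tF b (t - c) ≤ 1 - q/2} =
          (fun t : ℝ => tF b (t - c)) ⁻¹' (Icc (q/2) (1 - q/2)) := rfl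
      rw [this]
      exact (isClosed_Icc.preimage ((tF_cont hb0 hb1).comp
        (continuous_sub_right ((c : ℝ))))).measurableSet
    · exact (f0_measurable.comp (measurable_sub_const _)).div_const _
    · exact measurable_const
  set c := T x with hc
  set c' := T x' with hc'
  have hcc' : |c - c'| ≤ 1 := hT x x' hxx'
  set Bad : Set ℝ := {t | Real.exp ε * dens c' t < dens c t} with hBadDef
  have hBadm : MeasurableSet Bad :=
    measurableSet_lt ((hdens_meas c').const_mul _) (hdens_meas c)
  have hBadIn : ∀ t ∈ Bad, (q/2 ≤ tF b (t - c) ∧ tF b (t - c) ≤ 1 - q/2) ∧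
      ¬(q/2 ≤ tF b (t - c') ∧ tF b (t - c') ≤ 1 - q/2) := by
    intro t ht
    have hlt : Real.exp ε * dens c' t < dens c t := ht
    have hpos : 0 < dens c t :=
      lt_of_le_of_lt (mul_nonneg (Real.exp_pos ε).le (hdens_nonneg c' t)) hlt
    have hIn : q/2 ≤ tF b (t - c) ∧ tF b (t - c) ≤ 1 - q/2 := by
      by_contra hcon
      rw [hdens' c t, if_neg hcon] at hpos
      exact lt_irrefl 0 hpos
    refine ⟨hIn, fun hIn' => ?_⟩
    have hd1 : dens c t = f0 b (t - c) / (1 - q) := by rw [hdens' c t, if_pos hIn]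
    have hd2 : dens c' t = f0 b (t - c') / (1 - q) := by rw [hdens' c' t, if_pos hIn']
    have hr : (t : ℝ) - c' = (t - c) + ((c - c' : ℤ) : ℝ) := by push_cast; ring
    have hround : round (t - (c' : ℝ)) = round (t - (c : ℝ)) + (c - c') := by
      rw [hr, round_add_intCast]
    have habs1 : (c - c').natAbs ≤ 1 := by
      have := abs_le.1 hcc'
      omega
    have hnatAbs : (round (t - (c' : ℝ))).natAbs ≤ (round (t - (c : ℝ))).natAbs + 1 := by
      rw [hround]
      calc (round (t - (c : ℝ)) + (c - c')).natAbs
          ≤ (round (t - (c : ℝ))).natAbs + (c - c').natAbs := Int.natAbs_add_le _ _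
        _ ≤ (round (t - (c : ℝ))).natAbs + 1 := by omega
    have hf0 : f0 b (t - c) ≤ b⁻¹ * f0 b (t - c') := by
      rw [le_inv_mul_iff₀ hb0]
      show b * ((1 - b) / (1 + b) * b ^ (round (t - (c:ℝ))).natAbs) ≤
        (1 - b) / (1 + b) * b ^ (round (t - (c':ℝ))).natAbs
      have hpow : b ^ ((round (t - (c : ℝ))).natAbs + 1) ≤ b ^ (round (t - (c' : ℝ))).natAbs :=
        pow_le_pow_of_le_one hb0.le hb1.le hnatAbs
      calc b * ((1 - b) / (1 + b) * b ^ (round (t - (c:ℝ))).natAbs)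
          = (1 - b) / (1 + b) * b ^ ((round (t - (c:ℝ))).natAbs + 1) := by rw [pow_succ]; ring
        _ ≤ (1 - b) / (1 + b) * b ^ (round (t - (c':ℝ))).natAbs :=
            mul_le_mul_of_nonneg_left hpow (C_pos hb0 hb1).le
    have hcontra : dens c t ≤ Real.exp ε * dens c' t := by
      rw [hd1, hd2, hexp, div_eq_mul_inv, div_eq_mul_inv, ← mul_assoc]
      exact mul_le_mul_of_nonneg_right hf0 (inv_nonneg.2 (by linarith))
    exact absurd hlt (not_lt.2 hcontra)
  have hwidth : q / (2 * b) - q / 2 = δ * (1 - q) := by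
    have h2b : (2 : ℝ) * b ≠ 0 := by positivity
    field_simp
    nlinarith [hqD]
  have hABC : ∃ A Cc : ℝ, Cc - A ≤ δ * (1 - q) ∧
      ∀ t ∈ Bad, A ≤ tF b (t - c) ∧ tF b (t - c) ≤ Cc := by
    have hd : c - c' = -1 ∨ c - c' = 0 ∨ c - c' = 1 := by
      have := abs_le.1 hcc'
      omega
    rcases hd with hd | hd | hd
    · refine ⟨q/2, q/(2*b), by linarith, ?_⟩
      intro t ht
      obtain ⟨⟨h1, h2⟩, hnot⟩ := hBadIn t ht
      have hr : (t : ℝ) - c' = (t - c) - 1 := by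
        have : (c' : ℝ) = (c : ℝ) + 1 := by
          have : c' = c + 1 := by omega
          exact_mod_cast this
        linarith
      have hm : tF b ((t - c) - 1) ≤ tF b (t - c) := tF_mono hb0 hb1 (by linarith)
      have hlow : tF b ((t - c) - 1) < q/2 := by
        by_contra hge
        push_neg at hge
        exact hnot (by rw [hr]; exact ⟨hge, by linarith⟩)
      have hA := tF_ineqA hb0 hb1 ((t - c) - 1)
      rw [show (t - (c:ℝ)) - 1 + 1 = t - c by ring] at hA
      refine ⟨h1, ?_⟩
      have h3 : tF b ((t - c) - 1) / b ≤ (q/2) / b := (div_le_div_iff_of_pos_right hb0).2 hlow.le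
      calc tF b (t - c) ≤ tF b ((t - c) - 1) / b := hA
        _ ≤ (q/2) / b := h3
        _ = q / (2 * b) := by ring
    · refine ⟨q/2, q/2, by nlinarith, fun t ht => ?_⟩
      exfalso
      obtain ⟨hIn, hnot⟩ := hBadIn t ht
      have : (c' : ℝ) = (c : ℝ) := by exact_mod_cast (by omega : c' = c)
      rw [this] at hnot
      exact hnot hIn
    · refine ⟨1 - q/(2*b), 1 - q/2, by linarith, ?_⟩
      intro t ht
      obtain ⟨⟨h1, h2⟩, hnot⟩ := hBadIn t ht
      have hr : (t : ℝ) - c' = (t - c) + 1 := by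
        have : (c : ℝ) = (c' : ℝ) + 1 := by
          have : c = c' + 1 := by omega
          exact_mod_cast this
        linarith
      have hm : tF b (t - c) ≤ tF b ((t - c) + 1) := tF_mono hb0 hb1 (by linarith)
      have hhigh : 1 - q/2 < tF b ((t - c) + 1) := by
        by_contra hge
        push_neg at hge
        exact hnot (by rw [hr]; exact ⟨by linarith, hge⟩)
      have hBineq := tF_ineqB hb0 hb1 (t - c)
      refine ⟨?_, h2⟩
      have h3 : b - q/2 < b * tF b (t - c) := by linarith
      have h4 : b * (1 - q/(2*b)) = b - q/2 := by field_simp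
      have h5 : b * (1 - q/(2*b)) < b * tF b (t - c) := by rw [h4]; exact h3
      exact ((mul_lt_mul_iff_right₀ hb0).1 h5).le
  obtain ⟨A, Cc, hwid, hsub⟩ := hABC
  have main : P c B ≤ ENNReal.ofReal (Real.exp ε) * P c' B + ENNReal.ofReal δ := by
    rw [hP c, hP c', withDensity_apply _ hB, withDensity_apply _ hB]
    calc ∫⁻ t in B, ENNReal.ofReal (dens c t)
        ≤ ∫⁻ t in B, (ENNReal.ofReal (Real.exp ε * dens c' t) +
            Bad.indicator (fun t => ENNReal.ofReal (dens c t)) t) := by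
          apply lintegral_mono
          intro t
          show ENNReal.ofReal (dens c t) ≤ ENNReal.ofReal (Real.exp ε * dens c' t) +
            Bad.indicator (fun t => ENNReal.ofReal (dens c t)) t
          by_cases ht : t ∈ Bad
          · rw [indicator_of_mem ht]
            exact le_add_self
          · have hle : dens c t ≤ Real.exp ε * dens c' t := not_lt.1 ht
            rw [indicator_of_notMem ht, add_zero]
            exact ENNReal.ofReal_le_ofReal hle
      _ = (∫⁻ t in B, ENNReal.ofReal (Real.exp ε * dens c' t)) +
          ∫⁻ t in B, Bad.indicator (fun t => ENNReal.ofReal (dens c t)) t := by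
          apply lintegral_add_left
          exact ((hdens_meas c').const_mul _).ennreal_ofReal
      _ ≤ ENNReal.ofReal (Real.exp ε) * (∫⁻ t in B, ENNReal.ofReal (dens c' t)) +
          ENNReal.ofReal δ := by
          apply add_le_add
          · have he : ∀ t : ℝ, ENNReal.ofReal (Real.exp ε * dens c' t) =
                ENNReal.ofReal (Real.exp ε) * ENNReal.ofReal (dens c' t) :=
              fun t => ENNReal.ofReal_mul (Real.exp_pos ε).le
            rw [lintegral_congr he, lintegral_const_mul _ ((hdens_meas c').ennreal_ofReal)]
          · calc ∫⁻ t in B, Bad.indicator (fun t => ENNReal.ofReal (dens c t)) t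
                ≤ ∫⁻ t, Bad.indicator (fun t => ENNReal.ofReal (dens c t)) t :=
                  setLIntegral_le_lintegral _ _
              _ = ∫⁻ t in Bad, ENNReal.ofReal (dens c t) := lintegral_indicator hBadm _
              _ ≤ ENNReal.ofReal (Cc - A) * ENNReal.ofReal (1 - q)⁻¹ :=
                  key_bound hb0 hb1 hq1 dens hdens' c A Cc Bad (fun t ht _ => hsub t ht)
              _ ≤ ENNReal.ofReal (δ * (1 - q)) * ENNReal.ofReal (1 - q)⁻¹ :=
                  mul_le_mul_left (ENNReal.ofReal_le_ofReal hwid) _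
              _ = ENNReal.ofReal δ := by
                  rw [← ENNReal.ofReal_mul (mul_nonneg hδ (by linarith))]
                  congr 1
                  have : (1 : ℝ) - q ≠ 0 := by linarith
                  field_simp
  have hfin : P c' B ≠ ⊤ := by
    have h1 : P c' B ≤ ENNReal.ofReal ((1 - q/2) - q/2) * ENNReal.ofReal (1 - q)⁻¹ := by
      rw [hP c', withDensity_apply _ hB]
      calc ∫⁻ t in B, ENNReal.ofReal (dens c' t)
          ≤ ∫⁻ t, ENNReal.ofReal (dens c' t) := setLIntegral_le_lintegral _ _
        _ = ∫⁻ t in Set.univ, ENNReal.ofReal (dens c' t) := by rw [Measure.restrict_univ]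
        _ ≤ _ := key_bound hb0 hb1 hq1 dens hdens' c' (q/2) (1 - q/2) Set.univ
            (fun t _ hne => by
              by_contra hcon
              exact hne (by rw [hdens' c' t, if_neg hcon]))
    exact ne_top_of_le_ne_top (ENNReal.mul_ne_top ENNReal.ofReal_ne_top ENNReal.ofReal_ne_top) h1
  have h2 : ENNReal.ofReal (Real.exp ε) * P c' B + ENNReal.ofReal δ ≠ ⊤ :=
    ENNReal.add_ne_top.2 ⟨ENNReal.mul_ne_top ENNReal.ofReal_ne_top hfin, ENNReal.ofReal_ne_top⟩
  have h3 := ENNReal.toReal_mono h2 main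
  rw [ENNReal.toReal_add (ENNReal.mul_ne_top ENNReal.ofReal_ne_top hfin) ENNReal.ofReal_ne_top,
    ENNReal.toReal_mul, ENNReal.toReal_ofReal (Real.exp_pos ε).le,
    ENNReal.toReal_ofReal hδ] at h3
  exact h3
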